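/- If M and M' are nontrivial isomorphic Puiseux monoids, then there exists a positive rational q such that M' = qM. -/
import Mathlib


/-- `a` is an atom of the Puiseux monoid `M`. -/
def IsAtomIn (M : AddSubmonoid ℚ) (a : ℚ) : Prop :=
  a ∈ M ∧ a ≠ 0 ∧ ∀ x ∈ M, ∀ y ∈ M, a = x + y → x = 0 ∨ y = 0

/-- `b` is atomic in `M`: it is `0` or a sum of atoms of `M`. -/
def AtomicIn (M : AddSubmonoid ℚ) (b : ℚ) : Prop :=
  b ∈ AddSubmonoid.closure {a | IsAtomIn M a}

/-- `x` divides `y` in `M`. -/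
def DvdIn (M : AddSubmonoid ℚ) (x y : ℚ) : Prop := y - x ∈ M

def QuasiFurstenberg (M : AddSubmonoid ℚ) : Prop :=
  ∀ b ∈ M, b ≠ 0 → ∃ c ∈ M, ∃ a, IsAtomIn M a ∧ DvdIn M a (b + c) ∧ ¬ DvdIn M a c

def QuasiAtomic (M : AddSubmonoid ℚ) : Prop :=
  ∀ b ∈ M, ∃ c ∈ M, AtomicIn M (b + c)

def AlmostFurstenberg (M : AddSubmonoid ℚ) : Prop :=
  ∀ b ∈ M, b ≠ 0 →
    ∃ c, AtomicIn M c ∧ ∃ a, IsAtomIn M a ∧ DvdIn M a (b + c) ∧ ¬ DvdIn M a c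

def NearlyFurstenberg (M : AddSubmonoid ℚ) : Prop :=
  ∃ c ∈ M, ∀ b ∈ M, b ≠ 0 → ∃ a, IsAtomIn M a ∧ DvdIn M a (b + c) ∧ ¬ DvdIn M a c

def Furstenberg (M : AddSubmonoid ℚ) : Prop :=
  ∀ b ∈ M, b ≠ 0 → ∃ a, IsAtomIn M a ∧ DvdIn M a b

def Antimatter (M : AddSubmonoid ℚ) : Prop := ∀ a, ¬ IsAtomIn M a

def AtomicMonoid (M : AddSubmonoid ℚ) : Prop := ∀ b ∈ M, AtomicIn M b

def NearlyAtomic (M : AddSubmonoid ℚ) : Prop :=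
  ∃ c ∈ M, ∀ b ∈ M, b ≠ 0 → AtomicIn M (b + c)

def AlmostAtomic (M : AddSubmonoid ℚ) : Prop :=
  ∀ b ∈ M, ∃ c, AtomicIn M c ∧ AtomicIn M (b + c)

/-- If `M` and `M'` are nontrivial isomorphic Puiseux monoids, then `M' = qM`
for some positive rational `q`. -/
theorem stmt_0 (M M' : AddSubmonoid ℚ)
    (hM : ∀ x ∈ M, 0 ≤ x) (hM' : ∀ x ∈ M', 0 ≤ x)
    (hnt : ∃ x ∈ M, x ≠ 0) (hnt' : ∃ x ∈ M', x ≠ 0)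
    (hiso : Nonempty (M ≃+ M')) :
    ∃ q : ℚ, 0 < q ∧ (M' : Set ℚ) = (fun x => q * x) '' (M : Set ℚ) := by
  obtain ⟨φ⟩ := hiso
  obtain ⟨x₀, hx₀M, hx₀⟩ := hnt
  have hx₀pos : 0 < x₀ := lt_of_le_of_ne (hM x₀ hx₀M) (Ne.symm hx₀)
  have hf0pos : 0 < (φ ⟨x₀, hx₀M⟩ : ℚ) := by
    rcases lt_or_eq_of_le (hM' _ (φ ⟨x₀, hx₀M⟩).2) with h | h
    · exact h
    · exfalso
      have h1 : φ ⟨x₀, hx₀M⟩ = φ 0 := by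
        ext; simp [← h]
      have := φ.injective h1
      exact hx₀ (by simpa using congrArg Subtype.val this)
  set q : ℚ := (φ ⟨x₀, hx₀M⟩ : ℚ) / x₀ with hq
  have hqpos : 0 < q := div_pos hf0pos hx₀pos
  have hden : ∀ y : ℚ, (y.den : ℚ) * y = y.num := by
    intro y
    have hd : (y.den : ℚ) ≠ 0 := by exact_mod_cast y.den_ne_zero
    rw [mul_comm]
    exact ((div_eq_iff hd).mp (Rat.num_div_den y)).symm
  have key : ∀ x (hx : x ∈ M), (φ ⟨x, hx⟩ : ℚ) = q * x := by
    intro x hx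
    rcases eq_or_ne x 0 with rfl | hxne
    · have h0 : (⟨0, hx⟩ : M) = 0 := rfl
      simp [h0, map_zero]
    · have hxpos : 0 < x := lt_of_le_of_ne (hM x hx) (Ne.symm hxne)
      have hxnum : (0:ℤ) < x.num := Rat.num_pos.mpr hxpos
      have hx₀num : (0:ℤ) < x₀.num := Rat.num_pos.mpr hx₀pos
      set n : ℕ := x₀.num.natAbs * x.den with hn
      set m : ℕ := x.num.natAbs * x₀.den with hm
      have hcast : ∀ z : ℤ, 0 ≤ z → ((z.natAbs : ℕ) : ℚ) = (z : ℚ) := by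
        intro z hz
        rw [Nat.cast_natAbs, abs_of_nonneg hz]
      have hnQ : (n : ℚ) = (x₀.num : ℚ) * x.den := by
        rw [hn, Nat.cast_mul, hcast _ hx₀num.le]
      have hmQ : (m : ℚ) = (x.num : ℚ) * x₀.den := by
        rw [hm, Nat.cast_mul, hcast _ hxnum.le]
      have hnm : (n : ℚ) * x = (m : ℚ) * x₀ := by
        rw [hnQ, hmQ, mul_assoc, mul_assoc, hden x, hden x₀]
        ring
      have hsm : n • (⟨x, hx⟩ : M) = m • (⟨x₀, hx₀M⟩ : M) := by
        ext
        push_cast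
        simpa [nsmul_eq_mul] using hnm
      have h2 : (n : ℚ) * (φ ⟨x, hx⟩ : ℚ) = (m : ℚ) * (φ ⟨x₀, hx₀M⟩ : ℚ) := by
        have h3 := congrArg φ hsm
        rw [map_nsmul, map_nsmul] at h3
        have h4 := congrArg (fun z : M' => (z : ℚ)) h3
        simpa [nsmul_eq_mul] using h4
      have hnne : (n : ℚ) ≠ 0 := by
        rw [hnQ]
        positivity
      apply mul_left_cancel₀ hnne
      calc (n:ℚ) * (φ ⟨x, hx⟩ : ℚ) = (m:ℚ) * (φ ⟨x₀, hx₀M⟩ : ℚ) := h2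
        _ = (m:ℚ) * (q * x₀) := by
            rw [hq, div_mul_cancel₀ _ (ne_of_gt hx₀pos)]
        _ = q * ((m:ℚ) * x₀) := by ring
        _ = q * ((n:ℚ) * x) := by rw [hnm]
        _ = (n:ℚ) * (q * x) := by ring
  refine ⟨q, hqpos, ?_⟩
  ext y
  simp only [Set.mem_image, SetLike.mem_coe]
  constructor
  · intro hy
    refine ⟨(φ.symm ⟨y, hy⟩ : ℚ), (φ.symm ⟨y, hy⟩).2, ?_⟩
    have hk := key (φ.symm ⟨y, hy⟩ : ℚ) (φ.symm ⟨y, hy⟩).2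
    rw [← hk]
    have he : (⟨(φ.symm ⟨y, hy⟩ : ℚ), (φ.symm ⟨y, hy⟩).2⟩ : M) = φ.symm ⟨y, hy⟩ := rfl
    rw [he]
    simp
  · rintro ⟨x, hx, rfl⟩
    rw [← key x hx]
    exact (φ ⟨x, hx⟩).2
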